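/- (Incompleteness of graph-based validation: the butterfly example.) There exists an event structure with finitely many events and an event order graph (PO, RF) over it such that Derived(PO, RF) is irreflexive (there is no event e with (e, e) ∈ Derived(PO, RF)), yet the EOG (PO, RF) is infeasible. Hence the converse of the soundness theorem for the derived-order cycle test fails. -/

import Mathlib

/-- An event structure: events `E`, shared variables `V`, a variable map, and a
write predicate. Events that are not writes are reads. -/
structure EventStructure (E V : Type*) where
  var : E → V
  isWrite : E → Prop

/-- `(PO, RF)` is an event order graph over `S`: every read-from pair `(w, r)`
goes from a write to a read of the same variable. (`PO` is unconstrained.) -/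
def IsEOG {E V : Type*} (S : EventStructure E V) (PO RF : E → E → Prop) : Prop :=
  ∀ w r, RF w r → S.isWrite w ∧ ¬ S.isWrite r ∧ S.var w = S.var r

/-- `lt` is a feasible witness for the EOG `(PO, RF)`: a strict linear order
containing `PO`, containing `RF`, and such that no other write of the same
variable falls strictly between a read-from pair. -/
structure FeasibleWitness {E V : Type*} (S : EventStructure E V)
    (PO RF lt : E → E → Prop) : Prop where
  irrefl : ∀ a, ¬ lt a a
  trans : ∀ a b c, lt a b → lt b c → lt a c
  total : ∀ a b, a ≠ b → lt a b ∨ lt b a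
  po : ∀ a b, PO a b → lt a b
  rf_lt : ∀ w r, RF w r → lt w r
  rf_sep : ∀ w r, RF w r → ∀ w', S.isWrite w' → S.var w' = S.var w → w' ≠ w →
      lt w' w ∨ lt r w'

/-- The EOG `(PO, RF)` is feasible if some feasible witness exists. -/
def Feasible {E V : Type*} (S : EventStructure E V) (PO RF : E → E → Prop) : Prop :=
  ∃ lt : E → E → Prop, FeasibleWitness S PO RF lt

/-- The derived order relation: the least relation containing `PO` and `RF`
and closed under transitivity (Rule 1) and Rules 2 and 3. -/
inductive Derived {E V : Type*} (S : EventStructure E V) (PO RF : E → E → Prop) :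
    E → E → Prop
  | po {a b : E} : PO a b → Derived S PO RF a b
  | rf {a b : E} : RF a b → Derived S PO RF a b
  | trans {a b c : E} : Derived S PO RF a b → Derived S PO RF b c → Derived S PO RF a c
  | rule2 {w r w' : E} : RF w r → Derived S PO RF w' r → S.isWrite w' →
      S.var w' = S.var w → w' ≠ w → Derived S PO RF w' w
  | rule3 {w r w' : E} : RF w r → Derived S PO RF w w' → S.isWrite w' →
      S.var w' = S.var w → w' ≠ w → Derived S PO RF r w'

/-- Events for the butterfly counterexample. -/
inductive Ev : Type
  | w1 | w2 | r1 | r2 | v1 | v2 | s1 | s2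
  deriving DecidableEq

instance : Fintype Ev where
  elems := ⟨↑[Ev.w1, .w2, .r1, .r2, .v1, .v2, .s1, .s2], Multiset.coe_nodup.mpr (by decide)⟩
  complete := by intro x; cases x <;> decide

/-- Boolean write marker. -/
def isWB : Ev → Bool
  | .w1 | .w2 | .v1 | .v2 => true
  | _ => false

/-- Variable map: `false` = x (events w1,w2,r1,r2), `true` = y. -/
def vrB : Ev → Bool
  | .w1 | .w2 | .r1 | .r2 => false
  | _ => true

abbrev SB : EventStructure Ev Bool := ⟨vrB, fun e => isWB e = true⟩

def poB : Ev → Ev → Bool := fun a b =>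
  ((a = .w1 || a = .w2) && (b = .s1 || b = .s2)) ||
  ((a = .v1 || a = .v2) && (b = .r1 || b = .r2))

def rfB : Ev → Ev → Bool := fun a b =>
  (a = .w1 && b = .r1) || (a = .w2 && b = .r2) ||
  (a = .v1 && b = .s1) || (a = .v2 && b = .s2)

abbrev POr : Ev → Ev → Prop := fun a b => poB a b = true
abbrev RFr : Ev → Ev → Prop := fun a b => rfB a b = true

lemma L1 : ∀ a b : Ev, poB a b = true → (poB a b || rfB a b) = true := by decide

lemma L2 : ∀ a b : Ev, rfB a b = true → (poB a b || rfB a b) = true := by decide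

lemma L3 : ∀ a b c : Ev, (poB a b || rfB a b) = true → (poB b c || rfB b c) = true →
    (poB a c || rfB a c) = true := by decide

lemma L4 : ∀ w r w' : Ev, rfB w r = true → isWB w' = true → vrB w' = vrB w → w' ≠ w →
    (poB w' r || rfB w' r) = true → (poB w' w || rfB w' w) = true := by
  intro w r w'
  cases w <;> cases r <;> cases w' <;> decide

lemma L5 : ∀ w r w' : Ev, rfB w r = true → isWB w' = true → vrB w' = vrB w → w' ≠ w →
    (poB w w' || rfB w w') = true → (poB r w' || rfB r w') = true := by
  intro w r w'
  cases w <;> cases r <;> cases w' <;> decide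

/-- Every derived edge is already a `PO` or `RF` edge. -/
lemma derived_sub : ∀ a b : Ev, Derived SB POr RFr a b → (poB a b || rfB a b) = true := by
  intro a b h
  induction h with
  | @po a b h => exact L1 a b h
  | @rf a b h => exact L2 a b h
  | @trans a b c h1 h2 ih1 ih2 => exact L3 a b c ih1 ih2
  | @rule2 w r w' h1 h2 h3 h4 h5 ih => exact L4 w r w' h1 h3 h4 h5 ih
  | @rule3 w r w' h1 h2 h3 h4 h5 ih => exact L5 w r w' h1 h3 h4 h5 ih

/-- Incompleteness of graph-based validation (the butterfly
example): there is a finite event structure and an EOG over it whose derived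
order relation is irreflexive, yet the EOG is infeasible. -/
theorem stmt_11 :
    ∃ (E V : Type) (_ : Finite E) (S : EventStructure E V) (PO RF : E → E → Prop),
      IsEOG S PO RF ∧ (∀ e : E, ¬ Derived S PO RF e e) ∧ ¬ Feasible S PO RF := by
  refine ⟨Ev, Bool, inferInstance, SB, POr, RFr, ?_, ?_, ?_⟩
  · -- IsEOG
    intro w r h
    revert h; revert w r; decide
  · -- irreflexive
    intro e h
    have h1 := derived_sub e e h
    have h2 : ∀ e : Ev, (poB e e || rfB e e) = false := by decide
    simp [h2 e] at h1
  · -- infeasible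
    rintro ⟨lt, hw⟩
    -- separation facts
    have H1 := hw.rf_sep .w1 .r1 (by decide) .w2 (by decide) (by decide) (by decide)
    have H2 := hw.rf_sep .w2 .r2 (by decide) .w1 (by decide) (by decide) (by decide)
    have H3 := hw.rf_sep .v1 .s1 (by decide) .v2 (by decide) (by decide) (by decide)
    have H4 := hw.rf_sep .v2 .s2 (by decide) .v1 (by decide) (by decide) (by decide)
    -- program order facts
    have p11 : lt .w1 .s1 := hw.po _ _ (by decide)
    have p12 : lt .w1 .s2 := hw.po _ _ (by decide)
    have p21 : lt .w2 .s1 := hw.po _ _ (by decide)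
    have p22 : lt .w2 .s2 := hw.po _ _ (by decide)
    have q11 : lt .v1 .r1 := hw.po _ _ (by decide)
    have q12 : lt .v1 .r2 := hw.po _ _ (by decide)
    have q21 : lt .v2 .r1 := hw.po _ _ (by decide)
    have q22 : lt .v2 .r2 := hw.po _ _ (by decide)
    have hx : lt .r1 .w2 ∨ lt .r2 .w1 := by
      rcases H1 with h | h
      · rcases H2 with h' | h'
        · exact absurd (hw.trans _ _ _ h h') (hw.irrefl _)
        · exact Or.inr h'
      · exact Or.inl h
    have hy : lt .s1 .v2 ∨ lt .s2 .v1 := by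
      rcases H3 with h | h
      · rcases H4 with h' | h'
        · exact absurd (hw.trans _ _ _ h h') (hw.irrefl _)
        · exact Or.inr h'
      · exact Or.inl h
    rcases hx with hx | hx <;> rcases hy with hy | hy
    · exact hw.irrefl _ (hw.trans _ _ _ (hw.trans _ _ _ (hw.trans _ _ _ hx p21) hy) q21)
    · exact hw.irrefl _ (hw.trans _ _ _ (hw.trans _ _ _ (hw.trans _ _ _ hx p22) hy) q11)
    · exact hw.irrefl _ (hw.trans _ _ _ (hw.trans _ _ _ (hw.trans _ _ _ hx p11) hy) q22)
    · exact hw.irrefl _ (hw.trans _ _ _ (hw.trans _ _ _ (hw.trans _ _ _ hx p12) hy) q12)
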